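/- Let G be a totally disconnected locally compact Hausdorff topological group and g ∈ G. Then there exists a compact open subgroup of G that is tidy above for g. -/

import Mathlib

open MeasureTheory Pointwise

variable {G : Type*}

/-- The conjugate subgroup `gUg⁻¹`. -/
def conjSubgroup [Group G] (g : G) (U : Subgroup G) : Subgroup G :=
  U.map (MulAut.conj g).toMonoidHom

/-- A subgroup is compact open if its carrier set is compact and open. -/
def Subgroup.IsCompactOpen [Group G] [TopologicalSpace G] (U : Subgroup G) : Prop :=
  IsCompact (U : Set G) ∧ IsOpen (U : Set G)

/-- `U₊ = ⋂_{n ≥ 0} gⁿ U g⁻ⁿ`. -/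
def plusSubgroup [Group G] (g : G) (U : Subgroup G) : Subgroup G :=
  ⨅ n : ℕ, conjSubgroup (g ^ n) U

/-- `U₋ = ⋂_{n ≥ 0} g⁻ⁿ U gⁿ`. -/
def minusSubgroup [Group G] (g : G) (U : Subgroup G) : Subgroup G :=
  ⨅ n : ℕ, conjSubgroup (g⁻¹ ^ n) U

/-- `U` is tidy above for `g` if `[gU₊g⁻¹ : U₊] = [gUg⁻¹ : gUg⁻¹ ∩ U]`. -/
def TidyAbove [Group G] (g : G) (U : Subgroup G) : Prop :=
  (plusSubgroup g U).relIndex (conjSubgroup g (plusSubgroup g U)) = U.relIndex (conjSubgroup g U)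

/-- `U₊₊ = ⋃_{n ≥ 0} gⁿ U₊ g⁻ⁿ` as a set. -/
def plusPlusSet [Group G] (g : G) (U : Subgroup G) : Set G :=
  ⋃ n : ℕ, ((conjSubgroup (g ^ n) (plusSubgroup g U) : Subgroup G) : Set G)

/-- `U₋₋ = ⋃_{n ≥ 0} g⁻ⁿ U₋ gⁿ` as a set. -/
def minusMinusSet [Group G] (g : G) (U : Subgroup G) : Set G :=
  ⋃ n : ℕ, ((conjSubgroup (g⁻¹ ^ n) (minusSubgroup g U) : Subgroup G) : Set G)

/-- `U` is tidy below for `g` if `U₊₊` and `U₋₋` are closed. -/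
def TidyBelow [Group G] [TopologicalSpace G] (g : G) (U : Subgroup G) : Prop :=
  IsClosed (plusPlusSet g U) ∧ IsClosed (minusMinusSet g U)

/-- `U` is tidy for `g` if it is tidy above and tidy below for `g`. -/
def Tidy [Group G] [TopologicalSpace G] (g : G) (U : Subgroup G) : Prop :=
  TidyAbove g U ∧ TidyBelow g U

/-! ### Auxiliary lemmas on `conjSubgroup` -/

section ConjAlgebra

variable [Group G]

lemma mem_conjSubgroup {g x : G} {U : Subgroup G} :
    x ∈ conjSubgroup g U ↔ g⁻¹ * x * g ∈ U := by
  rw [conjSubgroup, Subgroup.mem_map_equiv, MulAut.conj_symm_apply]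

lemma conjSubgroup_one (U : Subgroup G) : conjSubgroup (1 : G) U = U := by
  ext x; simp [mem_conjSubgroup]

lemma conjSubgroup_conjSubgroup (a b : G) (U : Subgroup G) :
    conjSubgroup a (conjSubgroup b U) = conjSubgroup (a * b) U := by
  ext x; simp [mem_conjSubgroup, mul_assoc]

lemma conjSubgroup_mono (g : G) {U V : Subgroup G} (h : U ≤ V) :
    conjSubgroup g U ≤ conjSubgroup g V :=
  Subgroup.map_mono h

lemma conjSubgroup_iInf {ι : Sort*} (g : G) (S : ι → Subgroup G) :
    conjSubgroup g (⨅ i, S i) = ⨅ i, conjSubgroup g (S i) := by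
  ext x; simp [mem_conjSubgroup, Subgroup.mem_iInf]

lemma coe_conjSubgroup_preimage (g : G) (U : Subgroup G) :
    (conjSubgroup g U : Set G) = (fun x => g⁻¹ * x * g) ⁻¹' (U : Set G) := by
  ext x; exact mem_conjSubgroup

lemma coe_conjSubgroup_image (g : G) (U : Subgroup G) :
    (conjSubgroup g U : Set G) = (fun x => g * x * g⁻¹) '' (U : Set G) := by
  ext x
  simp only [Set.mem_image, SetLike.mem_coe, mem_conjSubgroup]
  constructor
  · intro hx
    exact ⟨g⁻¹ * x * g, hx, by group⟩
  · rintro ⟨u, hu, rfl⟩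
    simpa [mul_assoc] using hu

end ConjAlgebra

section ConjTopology

variable [Group G] [TopologicalSpace G] [IsTopologicalGroup G]

lemma isCompact_conjSubgroup (g : G) {U : Subgroup G} (h : IsCompact (U : Set G)) :
    IsCompact ((conjSubgroup g U : Subgroup G) : Set G) := by
  rw [coe_conjSubgroup_image]
  exact h.image (by fun_prop)

lemma isOpen_conjSubgroup (g : G) {U : Subgroup G} (h : IsOpen (U : Set G)) :
    IsOpen ((conjSubgroup g U : Subgroup G) : Set G) := by
  rw [coe_conjSubgroup_preimage]
  exact h.preimage (by fun_prop)

lemma isCompactOpen_conjSubgroup (g : G) {U : Subgroup G} (h : U.IsCompactOpen) :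
    (conjSubgroup g U).IsCompactOpen :=
  ⟨isCompact_conjSubgroup g h.1, isOpen_conjSubgroup g h.2⟩

/-- An open subgroup has nonzero (i.e. finite) relative index in any subgroup with
compact carrier. -/
lemma relindex_ne_zero_of_isOpen_of_isCompact {V K : Subgroup G}
    (hV : IsOpen (V : Set G)) (hK : IsCompact (K : Set G)) : V.relIndex K ≠ 0 := by
  haveI : CompactSpace K := isCompact_iff_compactSpace.mp hK
  haveI : Finite (K ⧸ V.subgroupOf K) := by
    apply Subgroup.quotient_finite_of_isOpen
    rw [Subgroup.coe_subgroupOf]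
    exact hV.preimage continuous_subtype_val
  exact Subgroup.index_ne_zero_of_finite

end ConjTopology

/-! ### The decreasing sequence `Vₙ₊₁ = V ⊓ g Vₙ g⁻¹` -/

section Vseq

variable [Group G]

private def Vseq (g : G) (V : Subgroup G) : ℕ → Subgroup G
  | 0 => V
  | n + 1 => V ⊓ conjSubgroup g (Vseq g V n)

private lemma Vseq_zero (g : G) (V : Subgroup G) : Vseq g V 0 = V := rfl

private lemma Vseq_succ (g : G) (V : Subgroup G) (n : ℕ) :
    Vseq g V (n + 1) = V ⊓ conjSubgroup g (Vseq g V n) := rfl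

private lemma Vseq_le (g : G) (V : Subgroup G) : ∀ n, Vseq g V n ≤ V := by
  intro n
  cases n with
  | zero => exact le_of_eq (Vseq_zero g V)
  | succ n => exact inf_le_left

private lemma Vseq_succ_le (g : G) (V : Subgroup G) : ∀ n, Vseq g V (n + 1) ≤ Vseq g V n
  | 0 => inf_le_left
  | n + 1 => inf_le_inf_left V (conjSubgroup_mono g (Vseq_succ_le g V n))

private lemma Vseq_antitone (g : G) (V : Subgroup G) : Antitone (Vseq g V) :=
  antitone_nat_of_succ_le (Vseq_succ_le g V)

private lemma Vseq_le_conjpow (g : G) (V : Subgroup G) :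
    ∀ n, Vseq g V n ≤ conjSubgroup (g ^ n) V
  | 0 => by rw [pow_zero, conjSubgroup_one]; exact le_of_eq (Vseq_zero g V)
  | n + 1 => by
    rw [pow_succ', ← conjSubgroup_conjSubgroup]
    exact le_trans inf_le_right (conjSubgroup_mono g (Vseq_le_conjpow g V n))

private lemma conjpow_plusSubgroup (g : G) (V : Subgroup G) (m : ℕ) :
    conjSubgroup (g ^ m) (plusSubgroup g V) = ⨅ k : ℕ, conjSubgroup (g ^ (m + k)) V := by
  rw [plusSubgroup, conjSubgroup_iInf]
  exact iInf_congr fun k => by rw [conjSubgroup_conjSubgroup, ← pow_add]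

private lemma plus_le_conjpow_plus (g : G) (V : Subgroup G) (m : ℕ) :
    plusSubgroup g V ≤ conjSubgroup (g ^ m) (plusSubgroup g V) := by
  rw [conjpow_plusSubgroup]
  exact le_iInf fun k => iInf_le (fun n => conjSubgroup (g ^ n) V) (m + k)

private lemma plus_le_conj_plus (g : G) (V : Subgroup G) :
    plusSubgroup g V ≤ conjSubgroup g (plusSubgroup g V) := by
  have h := plus_le_conjpow_plus g V 1
  rwa [pow_one] at h

private lemma plus_le_self (g : G) (V : Subgroup G) : plusSubgroup g V ≤ V := by
  have h := iInf_le (fun n => conjSubgroup (g ^ n) V) 0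
  rwa [pow_zero, conjSubgroup_one] at h

private lemma plus_le_Vseq (g : G) (V : Subgroup G) : ∀ n, plusSubgroup g V ≤ Vseq g V n
  | 0 => plus_le_self g V
  | n + 1 => le_inf (plus_le_self g V)
      (le_trans (plus_le_conj_plus g V) (conjSubgroup_mono g (plus_le_Vseq g V n)))

private lemma iInf_Vseq (g : G) (V : Subgroup G) : (⨅ n, Vseq g V n) = plusSubgroup g V :=
  le_antisymm
    (le_iInf fun n => le_trans (iInf_le (Vseq g V) n) (Vseq_le_conjpow g V n))
    (le_iInf (plus_le_Vseq g V))

private lemma plusSubgroup_Vseq (g : G) (V : Subgroup G) (N : ℕ) :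
    plusSubgroup g (Vseq g V N) = plusSubgroup g V :=
  le_antisymm
    (le_iInf fun n => le_trans (iInf_le (fun n => conjSubgroup (g ^ n) (Vseq g V N)) n)
      (conjSubgroup_mono _ (Vseq_le g V N)))
    (le_iInf fun n => le_trans (plus_le_conjpow_plus g V n)
      (conjSubgroup_mono _ (le_iInf (plus_le_Vseq g V) |>.trans (iInf_le _ N))))

private lemma conj_Vseq_inf_V (g : G) (V : Subgroup G) (n : ℕ) :
    conjSubgroup g (Vseq g V n) ⊓ V = Vseq g V (n + 1) := by
  rw [Vseq_succ, inf_comm]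

private lemma conj_Vseq_inf_self (g : G) (V : Subgroup G) (n : ℕ) :
    conjSubgroup g (Vseq g V n) ⊓ Vseq g V n = Vseq g V (n + 1) := by
  refine le_antisymm ?_ (le_inf inf_le_right (Vseq_succ_le g V n))
  calc conjSubgroup g (Vseq g V n) ⊓ Vseq g V n
      ≤ conjSubgroup g (Vseq g V n) ⊓ V := inf_le_inf_left _ (Vseq_le g V n)
    _ = Vseq g V (n + 1) := conj_Vseq_inf_V g V n

private lemma conj_plus_inf_V (g : G) (V : Subgroup G) :
    conjSubgroup g (plusSubgroup g V) ⊓ V = plusSubgroup g V := by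
  refine le_antisymm ?_ (le_inf (plus_le_conj_plus g V) (plus_le_self g V))
  show _ ≤ ⨅ n : ℕ, conjSubgroup (g ^ n) V
  refine le_iInf fun n => ?_
  cases n with
  | zero => rw [pow_zero, conjSubgroup_one]; exact inf_le_right
  | succ k =>
    refine le_trans inf_le_left ?_
    have h1 := conjpow_plusSubgroup g V 1
    rw [pow_one] at h1
    rw [h1]
    have h2 := iInf_le (fun j => conjSubgroup (g ^ (1 + j)) V) k
    rwa [add_comm 1 k] at h2

private lemma conj_plus_inf_self (g : G) (V : Subgroup G) :
    conjSubgroup g (plusSubgroup g V) ⊓ plusSubgroup g V = plusSubgroup g V :=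
  le_antisymm inf_le_right (le_inf (plus_le_conj_plus g V) le_rfl)

end Vseq

/-! ### Counting lemmas on relative indices -/

section Counting

variable [Group G]

private lemma relindex_surj {A B L : Subgroup G} (hAB : A ≤ B)
    (hcard : L.relIndex A = L.relIndex B) (hne : L.relIndex A ≠ 0) :
    ∀ b ∈ B, ∃ a ∈ A, b⁻¹ * a ∈ L := by
  haveI hfA : Finite (A ⧸ L.subgroupOf A) := Nat.finite_of_card_ne_zero hne
  haveI hfB : Finite (B ⧸ L.subgroupOf B) :=
    Nat.finite_of_card_ne_zero (show L.relIndex B ≠ 0 by rw [← hcard]; exact hne)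
  set f := Subgroup.quotientSubgroupOfEmbeddingOfLE L hAB with hf
  have hbij : Function.Bijective f := by
    refine (Nat.bijective_iff_injective_and_card f).mpr ⟨f.injective, ?_⟩
    rw [← Subgroup.index_eq_card, ← Subgroup.index_eq_card]
    exact hcard
  intro b hb
  obtain ⟨q, hq⟩ := hbij.2 (QuotientGroup.mk ⟨b, hb⟩)
  obtain ⟨a, rfl⟩ := QuotientGroup.mk_surjective q
  rw [hf, Subgroup.quotientSubgroupOfEmbeddingOfLE_apply_mk] at hq
  have h := QuotientGroup.eq.mp hq.symm
  rw [Subgroup.mem_subgroupOf] at h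
  refine ⟨(a : G), a.2, ?_⟩
  simpa using h

private lemma relindex_le_of_forall_exists {A B L : Subgroup G} (hAB : A ≤ B)
    (hne : L.relIndex A ≠ 0) (h : ∀ b ∈ B, ∃ a ∈ A, b⁻¹ * a ∈ L) :
    L.relIndex B ≤ L.relIndex A := by
  haveI hfA : Finite (A ⧸ L.subgroupOf A) := Nat.finite_of_card_ne_zero hne
  set f := Subgroup.quotientSubgroupOfEmbeddingOfLE L hAB with hf
  have hsurj : Function.Surjective f := by
    intro q
    induction q using QuotientGroup.induction_on with | H b => ?_
    obtain ⟨a, haA, hba⟩ := h (b : G) b.2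
    refine ⟨QuotientGroup.mk ⟨a, haA⟩, ?_⟩
    rw [hf, Subgroup.quotientSubgroupOfEmbeddingOfLE_apply_mk, QuotientGroup.eq,
      Subgroup.mem_subgroupOf]
    simpa [mul_inv_rev] using inv_mem hba
  have hle := Nat.card_le_card_of_surjective f hsurj
  rwa [← Subgroup.index_eq_card, ← Subgroup.index_eq_card] at hle

end Counting

/-! ### van Dantzig's theorem -/

section VanDantzig

variable [Group G] [TopologicalSpace G] [IsTopologicalGroup G] [LocallyCompactSpace G]
  [T2Space G] [TotallyDisconnectedSpace G]

private lemma exists_isCompactOpen : ∃ V : Subgroup G, V.IsCompactOpen := by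
  obtain ⟨K, hKc, hKn⟩ := exists_compact_mem_nhds (1 : G)
  obtain ⟨W, hWclopen, hW1, hWK⟩ :=
    loc_compact_Haus_tot_disc_of_zero_dim.mem_nhds_iff.mp hKn
  have hWcompact : IsCompact W := hKc.of_isClosed_subset hWclopen.1 hWK
  set A : Set G := {h : G | ∀ w ∈ W, h * w ∈ W} with hA
  have hAopen : IsOpen A := by
    rw [isOpen_iff_mem_nhds]
    intro h hh
    have himg : IsCompact ((h * ·) '' W) := hWcompact.image (continuous_mul_left h)
    have hsub : (h * ·) '' W ⊆ W := by
      rintro _ ⟨w, hw, rfl⟩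
      exact hh w hw
    obtain ⟨N, hN, hNW⟩ := compact_open_separated_mul_left himg hWclopen.2 hsub
    rw [← map_mul_right_nhds_one h]
    refine Filter.mem_map.mpr (Filter.mem_of_superset hN ?_)
    intro v hv w hw
    show v * h * w ∈ W
    rw [mul_assoc]
    exact hNW (Set.mul_mem_mul hv ⟨w, hw, rfl⟩)
  set S : Subgroup G :=
    { carrier := {h : G | h ∈ A ∧ h⁻¹ ∈ A}
      one_mem' := by
        constructor <;> · intro w hw; simpa using hw
      mul_mem' := by
        rintro a b ⟨ha1, ha2⟩ ⟨hb1, hb2⟩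
        constructor
        · intro w hw
          rw [mul_assoc]
          exact ha1 _ (hb1 w hw)
        · intro w hw
          rw [mul_inv_rev, mul_assoc]
          exact hb2 _ (ha2 w hw)
      inv_mem' := by
        rintro a ⟨ha1, ha2⟩
        exact ⟨ha2, by simpa using ha1⟩ } with hS
  have hSopen : IsOpen (S : Set G) := hAopen.inter (hAopen.preimage continuous_inv)
  have hSsubW : (S : Set G) ⊆ W := by
    intro h hh
    have := hh.1 1 hW1
    rwa [mul_one] at this
  have hSclosed : IsClosed (S : Set G) := Subgroup.isClosed_of_isOpen S hSopen
  exact ⟨S, hWcompact.of_isClosed_subset hSclosed hSsubW, hSopen⟩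

end VanDantzig

/-- There exists a compact open subgroup tidy above for `g`. -/
theorem exists_tidyAbove
    [Group G] [TopologicalSpace G] [IsTopologicalGroup G] [LocallyCompactSpace G] [T2Space G]
    [TotallyDisconnectedSpace G] (g : G) :
    ∃ U : Subgroup G, U.IsCompactOpen ∧ TidyAbove g U := by
  obtain ⟨V, hV⟩ := exists_isCompactOpen (G := G)
  -- Each `Vseq g V n` is compact open.
  have hVseqCO : ∀ n, (Vseq g V n).IsCompactOpen := by
    intro n
    induction n with
    | zero => exact (Vseq_zero g V) ▸ hV
    | succ k ih =>
      have h := isCompactOpen_conjSubgroup g ih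
      constructor
      · rw [Vseq_succ, Subgroup.coe_inf]
        exact hV.1.inter_right h.1.isClosed
      · rw [Vseq_succ, Subgroup.coe_inf]
        exact hV.2.inter h.2
  -- The sequence of indices is positive and non-increasing.
  set a : ℕ → ℕ := fun n => V.relIndex (conjSubgroup g (Vseq g V n)) with ha_def
  have ha_ne : ∀ n, a n ≠ 0 := fun n =>
    relindex_ne_zero_of_isOpen_of_isCompact hV.2 (isCompact_conjSubgroup g (hVseqCO n).1)
  have hstep : ∀ n, a (n + 1) ≤ a n := fun n =>
    Subgroup.relIndex_le_of_le_right (conjSubgroup_mono g (Vseq_succ_le g V n)) (ha_ne n)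
  have hmono : ∀ {m n : ℕ}, m ≤ n → a n ≤ a m := fun h => antitone_nat_of_succ_le hstep h
  -- It is eventually constant.
  obtain ⟨N, hNmin⟩ : ∃ N, ∀ n, N ≤ n → a n = a N := by
    obtain ⟨N, hNa⟩ := Nat.sInf_mem (Set.range_nonempty a)
    refine ⟨N, fun n hn => le_antisymm (hmono hn) ?_⟩
    calc a N = sInf (Set.range a) := hNa
      _ ≤ a n := Nat.sInf_le (Set.mem_range_self n)
  -- Beyond `N`, each coset at one level is hit by the next level.
  have key : ∀ n, N ≤ n → ∀ b ∈ conjSubgroup g (Vseq g V n),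
      ∃ c ∈ conjSubgroup g (Vseq g V (n + 1)), b⁻¹ * c ∈ V := by
    intro n hn
    refine relindex_surj (conjSubgroup_mono g (Vseq_succ_le g V n)) ?_ (ha_ne (n + 1))
    show a (n + 1) = a n
    rw [hNmin (n + 1) (le_trans hn (Nat.le_succ n)), hNmin n hn]
  -- Hence each coset at level `N` is hit at every deeper level.
  have chain : ∀ x ∈ conjSubgroup g (Vseq g V N), ∀ n : ℕ,
      ∃ y ∈ conjSubgroup g (Vseq g V (N + n)), x⁻¹ * y ∈ V := by
    intro x hx n
    induction n with
    | zero => exact ⟨x, hx, by rw [inv_mul_cancel]; exact one_mem V⟩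
    | succ k ih =>
      obtain ⟨y, hy, hxy⟩ := ih
      obtain ⟨z, hz, hyz⟩ := key (N + k) (Nat.le_add_right N k) y hy
      refine ⟨z, hz, ?_⟩
      have hm := mul_mem hxy hyz
      rwa [show x⁻¹ * y * (y⁻¹ * z) = x⁻¹ * z by group] at hm
  have hWclosed : ∀ n, IsClosed ((conjSubgroup g (Vseq g V n) : Subgroup G) : Set G) :=
    fun n => (isCompact_conjSubgroup g (hVseqCO n).1).isClosed
  have hVclosed : IsClosed (V : Set G) := hV.1.isClosed
  -- By compactness, each coset at level `N` is hit by `g U₊ g⁻¹`.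
  have reach : ∀ x ∈ conjSubgroup g (Vseq g V N),
      ∃ y ∈ conjSubgroup g (plusSubgroup g V), x⁻¹ * y ∈ V := by
    intro x hx
    set t : ℕ → Set G := fun n =>
      ((conjSubgroup g (Vseq g V (N + n)) : Subgroup G) : Set G) ∩ {y | x⁻¹ * y ∈ V} with ht
    have ht_closed : ∀ n, IsClosed (t n) := fun n =>
      (hWclosed (N + n)).inter (hVclosed.preimage (continuous_const.mul continuous_id))
    have ht_ne : ∀ n, (t n).Nonempty := fun n => by
      obtain ⟨y, hy, hxy⟩ := chain x hx n
      exact ⟨y, hy, hxy⟩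
    have ht_sub : ∀ n, t (n + 1) ⊆ t n := fun n =>
      Set.inter_subset_inter_left _
        (SetLike.coe_subset_coe.mpr (conjSubgroup_mono g (Vseq_antitone g V (by omega))))
    have ht0 : IsCompact (t 0) :=
      IsCompact.of_isClosed_subset (isCompact_conjSubgroup g (hVseqCO (N + 0)).1)
        (ht_closed 0) Set.inter_subset_left
    obtain ⟨y, hy⟩ := IsCompact.nonempty_iInter_of_sequence_nonempty_isCompact_isClosed
      t ht_sub ht_ne ht0 ht_closed
    rw [Set.mem_iInter] at hy
    have hyV : x⁻¹ * y ∈ V := (hy 0).2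
    have hyP : y ∈ conjSubgroup g (plusSubgroup g V) := by
      rw [← iInf_Vseq g V, conjSubgroup_iInf, Subgroup.mem_iInf]
      intro n
      exact conjSubgroup_mono g (Vseq_antitone g V (Nat.le_add_left n N)) (hy n).1
    exact ⟨y, hyP, hyV⟩
  -- `U₊` is compact, so the relevant index is finite.
  have hPc : IsCompact ((plusSubgroup g V : Subgroup G) : Set G) := by
    have hcl : IsClosed ((plusSubgroup g V : Subgroup G) : Set G) := by
      rw [plusSubgroup, Subgroup.coe_iInf]
      exact isClosed_iInter fun n => (isCompact_conjSubgroup (g ^ n) hV.1).isClosed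
    exact IsCompact.of_isClosed_subset hV.1 hcl (SetLike.coe_subset_coe.mpr (plus_le_self g V))
  have hPrel_ne : V.relIndex (conjSubgroup g (plusSubgroup g V)) ≠ 0 :=
    relindex_ne_zero_of_isOpen_of_isCompact hV.2 (isCompact_conjSubgroup g hPc)
  -- Conclude with `U = Vseq g V N`.
  refine ⟨Vseq g V N, hVseqCO N, ?_⟩
  unfold TidyAbove
  rw [plusSubgroup_Vseq g V N]
  have e1 : (plusSubgroup g V).relIndex (conjSubgroup g (plusSubgroup g V))
      = V.relIndex (conjSubgroup g (plusSubgroup g V)) := by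
    rw [← Subgroup.inf_relIndex_right (plusSubgroup g V) (conjSubgroup g (plusSubgroup g V)),
      ← Subgroup.inf_relIndex_right V (conjSubgroup g (plusSubgroup g V)),
      inf_comm (plusSubgroup g V), inf_comm V, conj_plus_inf_self g V, conj_plus_inf_V g V]
  have e2 : (Vseq g V N).relIndex (conjSubgroup g (Vseq g V N))
      = V.relIndex (conjSubgroup g (Vseq g V N)) := by
    rw [← Subgroup.inf_relIndex_right (Vseq g V N) (conjSubgroup g (Vseq g V N)),
      ← Subgroup.inf_relIndex_right V (conjSubgroup g (Vseq g V N)),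
      inf_comm (Vseq g V N), inf_comm V, conj_Vseq_inf_self g V N, conj_Vseq_inf_V g V N]
  rw [e1, e2]
  refine le_antisymm ?_ ?_
  · exact Subgroup.relIndex_le_of_le_right (conjSubgroup_mono g (plus_le_Vseq g V N)) (ha_ne N)
  · exact relindex_le_of_forall_exists (conjSubgroup_mono g (plus_le_Vseq g V N)) hPrel_ne reach
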